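/- Let P be an Abelian-square-free string of length t-2 over {3,4,5,6} and U = 0·P·1·2·Pᴿ·0. Then in U^m, a factor of length exactly 2t centred between two consecutive letters 0 is not an Abelian square (the letters 1 and 2 remain unmatched between the halves). -/

import Mathlib

/-- A string is an Abelian square. -/
def IsAbSquare {α : Type*} (W : List α) : Prop :=
  ∃ U V : List α, W = U ++ V ∧ U.length = V.length ∧ U.Perm V

/-- A string is Abelian-square-free: no non-empty factor is an Abelian square. -/
def AbSquareFree {α : Type*} (S : List α) : Prop :=
  ∀ V : List α, V ≠ [] → V.IsInfix S → ¬ IsAbSquare V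

/-- Let P be Abelian-square-free of length t-2 over {3,4,5,6} and
U = 0·P·1·2·Pᴿ·0. In U^m, a factor of length exactly 2t centred between two
consecutive letters 0 (at a position that is a multiple of 2t) is not an
Abelian square: the letters 1 and 2 remain unmatched between the halves. -/
theorem centred_factor_length_2t_not_absquare (t m r : ℕ) (P : List ℕ) (ht : 2 ≤ t)
    (hlenP : P.length = t - 2) (halph : ∀ c ∈ P, c ∈ ({3, 4, 5, 6} : Set ℕ))
    (hPsf : AbSquareFree P) (W : List ℕ)
    (hW : W = (List.replicate m ([0] ++ P ++ [1, 2] ++ P.reverse ++ [0])).flatten)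
    (hr : 2 * t ∣ r) (h1 : t ≤ r) (h2 : r + t ≤ W.length) :
    ¬ IsAbSquare ((W.drop (r - t)).take (2 * t)) := by
  obtain ⟨k, hk⟩ := hr
  have ht0 : 0 < t := by omega
  set L1 : List ℕ := [0] ++ P ++ [1] with hL1
  set L2 : List ℕ := [2] ++ P.reverse ++ [0] with hL2
  have hlen1 : L1.length = t := by simp [hL1, hlenP]; omega
  have hlen2 : L2.length = t := by simp [hL2, hlenP]; omega
  have hU : [0] ++ P ++ [1, 2] ++ P.reverse ++ [0] = L1 ++ L2 := by
    simp [hL1, hL2]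
  have hU2 : (L1 ++ L2).length = 2 * t := by
    rw [List.length_append, hlen1, hlen2]; ring
  have hk1 : 1 ≤ k := by nlinarith
  obtain ⟨j, rfl⟩ : ∃ j, k = j + 1 := ⟨k - 1, by omega⟩
  have hWlen : W.length = m * (2 * t) := by
    simp [hW, hU, hU2]
    omega
  have hkm : j + 1 < m := by nlinarith
  have hm : m = j + (1 + (1 + (m - j - 2))) := by omega
  set B : List ℕ := (List.replicate j (L1 ++ L2)).flatten with hB
  set C : List ℕ := (List.replicate (m-j-2) (L1 ++ L2)).flatten with hC
  have hWdec : W = B ++ (L1 ++ (L2 ++ (L1 ++ (L2 ++ C)))) := by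
    rw [hW, hU, hm, List.replicate_add, List.replicate_add, List.replicate_add]
    simp [hB, hC]
  have hBlen : B.length = j * (2 * t) := by
    simp [hB, hU2]
  have hrt : r - t = B.length + t := by
    rw [hBlen, hk]
    rw [Nat.sub_eq_iff_eq_add (by nlinarith)]
    ring
  have hfac : (W.drop (r - t)).take (2 * t) = L2 ++ L1 := by
    rw [hWdec, hrt, List.drop_length_add_append]
    have h3 : List.drop t (L1 ++ (L2 ++ (L1 ++ (L2 ++ C)))) = L2 ++ (L1 ++ (L2 ++ C)) := by
      rw [← hlen1, List.drop_left]
    rw [h3, show (2*t) = L2.length + L1.length by omega, List.take_length_add_append, List.take_left]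
  rw [hfac]
  rintro ⟨X, Y, hXY, hlenXY, hperm⟩
  have hXlen : X.length = L2.length := by
    have := congrArg List.length hXY
    simp [hlen1, hlen2] at this ⊢
    omega
  obtain ⟨hX, hY⟩ := List.append_inj hXY.symm hXlen
  have hcnt := hperm.count_eq 2
  have hP2 : P.count 2 = 0 := by
    refine List.count_eq_zero.mpr fun h => ?_
    have := halph 2 h
    simp at this
  rw [hX, hY] at hcnt
  simp [hL1, hL2, List.count_append, hP2, List.count_reverse] at hcnt
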